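/- arXiv:1801.05104 — 5 statements merged into one kernel-verified Lean document; each statement's English description precedes it below -/
import Mathlib

section
/- Let C be a clique of the CRAN-IDNC graph, let (b, z, u, f, r) ∈ C, and let K = {f' ∈ F : ∃ u', r' with (b, z, u', f', r') ∈ C} be the set of files scheduled at resource block (b, z) by C. Then K ∩ W(u) = {f}: the file combination transmitted at (b, z) contains exactly one file wanted by each of its targeted users. -/
/-- A vertex of the CRAN-IDNC graph: a tuple (b, z, u, f, r). -/
structure CV (B Z U F : Type*) where
  b : B
  z : Z
  u : U
  f : F
  r : ℝ


noncomputable instance {B Z U F : Type*} : DecidableEq (CV B Z U F) :=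
  Classical.decEq _

variable {B Z U F : Type*}

/-- `v` is a valid vertex: `f ∈ W(u)`, `r ∈ R`, and `r ≤ cap(b, z, u)`. -/
def IsVertex (W : U → Finset F) (Rset : Finset ℝ) (cap : B → Z → U → ℝ)
    (v : CV B Z U F) : Prop :=
  v.f ∈ W v.u ∧ v.r ∈ Rset ∧ v.r ≤ cap v.b v.z v.u

/-- Adjacency in the CRAN-IDNC graph. -/
def Adj (H : U → Finset F) (v v' : CV B Z U F) : Prop :=
  v ≠ v' ∧
    (((v.b, v.z) = (v'.b, v'.z) ∧
        ((v.f = v'.f ∨ (v.f ∈ H v'.u ∧ v'.f ∈ H v.u)) ∧ v.r = v'.r)) ∨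
      ((v.b, v.z) ≠ (v'.b, v'.z) ∧
        ((v.u = v'.u ∧ v.b = v'.b) ∨
          (v.b = v'.b ∧ (v.f = v'.f ∨ (v.f ∈ H v'.u ∧ v'.f ∈ H v.u))) ∨
          v.u ≠ v'.u)))

/-- A clique of the CRAN-IDNC graph: a finite set of valid vertices that are
pairwise adjacent. -/
def IsClique (H W : U → Finset F) (Rset : Finset ℝ) (cap : B → Z → U → ℝ)
    (C : Finset (CV B Z U F)) : Prop :=
  (∀ v ∈ C, IsVertex W Rset cap v) ∧
    ∀ v ∈ C, ∀ v' ∈ C, v ≠ v' → Adj H v v'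


/-- In any clique, the file combination transmitted at the resource block of a
vertex `v` contains exactly one file wanted by the user of `v`, namely `v.f`. -/
theorem clique_kappa_inter_wants {B Z U F : Type*}
    (H W : U → Finset F) (Rset : Finset ℝ) (cap : B → Z → U → ℝ)
    (hDisj : ∀ u, Disjoint (H u) (W u)) (hRpos : ∀ r ∈ Rset, 0 < r)
    (C : Finset (CV B Z U F)) (hC : IsClique H W Rset cap C)
    (v : CV B Z U F) (hv : v ∈ C) :
    {f : F | ∃ v' ∈ C, v'.b = v.b ∧ v'.z = v.z ∧ v'.f = f} ∩ ↑(W v.u) =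
      {v.f} := by
  obtain ⟨hvert, hadj⟩ := hC
  ext g
  simp only [Set.mem_inter_iff, Set.mem_setOf_eq, Finset.coe_mem, Set.mem_singleton_iff]
  constructor
  · rintro ⟨⟨v', hv', hb, hz, rfl⟩, hg⟩
    by_cases hvv : v' = v
    · subst hvv; rfl
    · rcases hadj v' hv' v hv hvv with ⟨_, ⟨_, ⟨hf | ⟨h1, h2⟩, _⟩⟩ | ⟨hne, _⟩⟩
      · exact hf
      · exact absurd hg (Finset.disjoint_left.mp (hDisj v.u) h1)
      · exact absurd (Prod.ext hb hz) hne
  · rintro rfl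
    exact ⟨⟨v, hv, rfl, rfl, rfl⟩, (hvert v hv).1⟩
end

section
/- Every clique C of the CRAN-IDNC graph induces a feasible schedule: defining τ_C(b, z) = {u ∈ U : ∃ f, r with (b, z, u, f, r) ∈ C}, κ_C(b, z) = {f ∈ F : ∃ u, r with (b, z, u, f, r) ∈ C}, and, when τ_C(b, z) ≠ ∅, r_C(b, z) as the common rate of the vertices of C at (b, z), the triple (τ_C, κ_C, r_C) satisfies all the feasibility conditions (i)–(iv) of a feasible schedule. -/
variable {B Z U F : Type*}

/-- The feasibility conditions (i)–(iv) of a schedule `(τ, κ, rate)`: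
(i) each user is served by at most one RRH; (ii) the combination `κ (b, z)`
contains exactly one wanted file of each targeted user and all its other files
are in that user's Has set; (iii) the rate does not exceed the capacity of any
targeted user (and lies in `Rset` whenever the block is used); and (iv) the
combination consists exactly of the wanted files of the targeted users. -/
def Feasible [DecidableEq F] (H W : U → Finset F) (Rset : Finset ℝ)
    (cap : B → Z → U → ℝ) (τ : B → Z → Finset U) (κ : B → Z → Finset F)
    (rate : B → Z → ℝ) : Prop :=
  (∀ b z, (τ b z).Nonempty → rate b z ∈ Rset) ∧
  (∀ b z b' z' u, u ∈ τ b z → u ∈ τ b' z' → b = b') ∧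
  (∀ b z u, u ∈ τ b z → ∃ f, κ b z ∩ W u = {f} ∧ κ b z \ {f} ⊆ H u) ∧
  (∀ b z u, u ∈ τ b z → rate b z ≤ cap b z u) ∧
  (∀ b z, κ b z = (τ b z).biUnion fun u => κ b z ∩ W u)

/-- The set of users targeted at resource block `(b, z)` by the clique `C`. -/
def cliqueTau [DecidableEq B] [DecidableEq Z] [DecidableEq U]
    (C : Finset (CV B Z U F)) (b : B) (z : Z) : Finset U :=
  (C.filter fun v => v.b = b ∧ v.z = z).image CV.u

/-- The file combination scheduled at resource block `(b, z)` by the clique `C`. -/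
def cliqueKappa [DecidableEq B] [DecidableEq Z] [DecidableEq F]
    (C : Finset (CV B Z U F)) (b : B) (z : Z) : Finset F :=
  (C.filter fun v => v.b = b ∧ v.z = z).image CV.f


/-- Every clique of the CRAN-IDNC graph induces a feasible schedule
`(cliqueTau C, cliqueKappa C, rate)`, where `rate` is the common rate of the
vertices of `C` at each occupied resource block. -/
theorem clique_induces_feasible_schedule {B Z U F : Type*}
    [DecidableEq B] [DecidableEq Z] [DecidableEq U] [DecidableEq F]
    (H W : U → Finset F) (Rset : Finset ℝ) (cap : B → Z → U → ℝ)
    (hDisj : ∀ u, Disjoint (H u) (W u)) (hRpos : ∀ r ∈ Rset, 0 < r)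
    (C : Finset (CV B Z U F)) (hC : IsClique H W Rset cap C) :
    ∃ rate : B → Z → ℝ, (∀ v ∈ C, rate v.b v.z = v.r) ∧
      Feasible H W Rset cap (cliqueTau C) (cliqueKappa C) rate := by
  classical
  obtain ⟨hVert, hAdj⟩ := hC
  have hsame : ∀ v ∈ C, ∀ v' ∈ C, v.b = v'.b → v.z = v'.z → v.r = v'.r := by
    intro v hv v' hv' hb hz
    by_cases h : v = v'
    · rw [h]
    · rcases (hAdj v hv v' hv' h).2 with ⟨_, _, hr⟩ | ⟨hne, _⟩
      · exact hr
      · exact absurd (by rw [hb, hz]) hne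
  have hLC : ∀ v ∈ C, ∀ v' ∈ C, v.b = v'.b → v.z = v'.z →
      v.f = v'.f ∨ (v.f ∈ H v'.u ∧ v'.f ∈ H v.u) := by
    intro v hv v' hv' hb hz
    by_cases h : v = v'
    · left; rw [h]
    · rcases (hAdj v hv v' hv' h).2 with ⟨_, hf, _⟩ | ⟨hne, _⟩
      · exact hf
      · exact absurd (by rw [hb, hz]) hne
  have hmemTau : ∀ b z u, u ∈ cliqueTau C b z ↔
      ∃ v, v ∈ C ∧ v.b = b ∧ v.z = z ∧ v.u = u := by
    intro b z u
    simp only [cliqueTau, Finset.mem_image, Finset.mem_filter]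
    constructor
    · rintro ⟨v, ⟨hv, hb, hz⟩, hu⟩; exact ⟨v, hv, hb, hz, hu⟩
    · rintro ⟨v, hv, hb, hz, hu⟩; exact ⟨v, ⟨hv, hb, hz⟩, hu⟩
  have hmemK : ∀ b z f, f ∈ cliqueKappa C b z ↔
      ∃ v, v ∈ C ∧ v.b = b ∧ v.z = z ∧ v.f = f := by
    intro b z f
    simp only [cliqueKappa, Finset.mem_image, Finset.mem_filter]
    constructor
    · rintro ⟨v, ⟨hv, hb, hz⟩, hf⟩; exact ⟨v, hv, hb, hz, hf⟩
    · rintro ⟨v, hv, hb, hz, hf⟩; exact ⟨v, ⟨hv, hb, hz⟩, hf⟩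
  set rate : B → Z → ℝ := fun b z =>
    if h : ∃ v, v ∈ C ∧ v.b = b ∧ v.z = z then h.choose.r else 0 with hratedef
  have hrate : ∀ v ∈ C, rate v.b v.z = v.r := by
    intro v hv
    have h : ∃ w, w ∈ C ∧ w.b = v.b ∧ w.z = v.z := ⟨v, hv, rfl, rfl⟩
    simp only [hratedef, dif_pos h]
    exact hsame _ h.choose_spec.1 v hv h.choose_spec.2.1 h.choose_spec.2.2
  refine ⟨rate, hrate, ?_, ?_, ?_, ?_, ?_⟩
  · -- rate ∈ Rset when τ nonempty
    intro b z ⟨u, hu⟩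
    obtain ⟨v, hv, hb, hz, hu⟩ := (hmemTau b z u).1 hu
    subst hb; subst hz
    rw [hrate v hv]
    exact (hVert v hv).2.1
  · -- (i)
    intro b z b' z' u hu hu'
    obtain ⟨v, hv, hb, hz, hvu⟩ := (hmemTau b z u).1 hu
    obtain ⟨v', hv', hb', hz', hvu'⟩ := (hmemTau b' z' u).1 hu'
    subst hb; subst hz; subst hb'; subst hz'
    by_cases h : v = v'
    · rw [h]
    · rcases (hAdj v hv v' hv' h).2 with ⟨heq, _⟩ | ⟨_, ⟨_, hbb⟩ | ⟨hbb, _⟩ | hneu⟩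
      · exact (Prod.mk.injEq _ _ _ _ ▸ heq).1
      · exact hbb
      · exact hbb
      · exact absurd (hvu.trans hvu'.symm) hneu
  · -- (ii)
    intro b z u hu
    obtain ⟨v, hv, hb, hz, hvu⟩ := (hmemTau b z u).1 hu
    subst hb; subst hz; subst hvu
    refine ⟨v.f, ?_, ?_⟩
    · ext f
      simp only [Finset.mem_inter, Finset.mem_singleton]
      constructor
      · rintro ⟨hfk, hfw⟩
        obtain ⟨v', hv', hb', hz', hf'⟩ := (hmemK v.b v.z f).1 hfk
        subst hf'
        rcases hLC v hv v' hv' hb'.symm hz'.symm with heq | ⟨_, hH⟩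
        · exact heq.symm
        · exact absurd hfw (Finset.disjoint_left.1 (hDisj v.u) hH)
      · rintro rfl
        exact ⟨(hmemK v.b v.z v.f).2 ⟨v, hv, rfl, rfl, rfl⟩, (hVert v hv).1⟩
    · intro f hf
      simp only [Finset.mem_sdiff, Finset.mem_singleton] at hf
      obtain ⟨hfk, hfne⟩ := hf
      obtain ⟨v', hv', hb', hz', hf'⟩ := (hmemK v.b v.z f).1 hfk
      subst hf'
      rcases hLC v hv v' hv' hb'.symm hz'.symm with heq | ⟨_, hH⟩
      · exact absurd heq.symm hfne
      · exact hH
  · -- (iii)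
    intro b z u hu
    obtain ⟨v, hv, hb, hz, hvu⟩ := (hmemTau b z u).1 hu
    subst hb; subst hz; subst hvu
    rw [hrate v hv]
    exact (hVert v hv).2.2
  · -- (iv)
    intro b z
    ext f
    simp only [Finset.mem_biUnion, Finset.mem_inter]
    constructor
    · intro hfk
      obtain ⟨v, hv, hb, hz, hf⟩ := (hmemK b z f).1 hfk
      refine ⟨v.u, (hmemTau b z v.u).2 ⟨v, hv, hb, hz, rfl⟩, hfk, ?_⟩
      rw [← hf]; exact (hVert v hv).1
    · rintro ⟨u, _, hfk, _⟩
      exact hfk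
end

section
/- For every clique C of the CRAN-IDNC graph, the total weight of the clique equals the throughput of its induced schedule: ∑_{(b,z,u,f,r) ∈ C} r = ∑_{(b,z) : τ_C(b,z) ≠ ∅} |τ_C(b, z)| · r_C(b, z), where τ_C(b, z) = {u ∈ U : ∃ f, r with (b, z, u, f, r) ∈ C} and r_C(b, z) is the common rate of the vertices of C at (b, z). -/
variable {B Z U F : Type*}

/-- The weight of a clique equals the throughput of its induced schedule. -/
theorem clique_weight_eq_throughput {B Z U F : Type*}
    [Fintype B] [Fintype Z] [DecidableEq B] [DecidableEq Z] [DecidableEq U]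
    (H W : U → Finset F) (Rset : Finset ℝ) (cap : B → Z → U → ℝ)
    (hDisj : ∀ u, Disjoint (H u) (W u)) (hRpos : ∀ r ∈ Rset, 0 < r)
    (C : Finset (CV B Z U F)) (hC : IsClique H W Rset cap C)
    (rate : B → Z → ℝ) (hrate : ∀ v ∈ C, rate v.b v.z = v.r) :
    ∑ v ∈ C, v.r =
      ∑ p ∈ Finset.univ.filter (fun p : B × Z => (cliqueTau C p.1 p.2).Nonempty),
        ((cliqueTau C p.1 p.2).card : ℝ) * rate p.1 p.2 := by
  classical
  obtain ⟨hvert, hadj⟩ := hC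
  have key : ∀ p : B × Z, ∑ v ∈ C.filter (fun v => v.b = p.1 ∧ v.z = p.2), v.r
      = ((cliqueTau C p.1 p.2).card : ℝ) * rate p.1 p.2 := by
    intro p
    have hinj : Set.InjOn CV.u (↑(C.filter fun v => v.b = p.1 ∧ v.z = p.2) : Set (CV B Z U F)) := by
      intro v hv v' hv' huu
      simp only [Finset.coe_filter, Set.mem_setOf_eq] at hv hv'
      obtain ⟨hvC, hvb, hvz⟩ := hv
      obtain ⟨hv'C, hv'b, hv'z⟩ := hv'
      by_contra hne
      obtain ⟨_, hcase⟩ := hadj v hvC v' hv'C hne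
      rcases hcase with ⟨hbz, hf, hr⟩ | ⟨hbz, _⟩
      · rcases hf with hf | ⟨hf1, hf2⟩
        · apply hne
          cases v; cases v'
          simp only [Prod.mk.injEq] at hbz
          simp_all
        · rw [← huu] at hf1
          exact absurd (hvert v hvC).1 (Finset.disjoint_left.mp (hDisj v.u) hf1)
      · exact hbz (by simp [hvb, hvz, hv'b, hv'z])
    have hcard : (cliqueTau C p.1 p.2).card
        = (C.filter fun v => v.b = p.1 ∧ v.z = p.2).card :=
      Finset.card_image_of_injOn hinj
    have hsum : ∑ v ∈ C.filter (fun v => v.b = p.1 ∧ v.z = p.2), v.r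
        = ∑ _v ∈ C.filter (fun v => v.b = p.1 ∧ v.z = p.2), rate p.1 p.2 := by
      refine Finset.sum_congr rfl fun v hv => ?_
      rw [Finset.mem_filter] at hv
      rw [← hv.2.1, ← hv.2.2, hrate v hv.1]
    rw [hsum, Finset.sum_const, hcard, nsmul_eq_mul]
  have hfib : ∑ v ∈ C, v.r
      = ∑ p : B × Z, ∑ v ∈ C.filter (fun v => v.b = p.1 ∧ v.z = p.2), v.r := by
    rw [← Finset.sum_fiberwise C (fun v => (v.b, v.z)) (fun v => v.r)]
    refine Finset.sum_congr rfl fun p _ => Finset.sum_congr ?_ fun _ _ => rfl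
    apply Finset.filter_congr
    intro v _
    simp [Prod.ext_iff]
  rw [hfib]
  rw [Finset.sum_congr rfl fun p _ => key p]
  symm
  apply Finset.sum_filter_of_ne
  intro p _ hne
  by_contra hemp
  rw [Finset.not_nonempty_iff_eq_empty] at hemp
  rw [hemp] at hne
  simp at hne
end

section
/- Every feasible schedule (τ, κ, r) induces a clique of the CRAN-IDNC graph: the set C = {(b, z, u, f_u, r(b, z)) : (b, z) ∈ B × Z, u ∈ τ(b, z)}, where f_u denotes the unique element of κ(b, z) ∩ W(u), is a clique, and its weight ∑_{v ∈ C} (rate of v) equals the throughput ∑_{(b,z) : τ(b,z) ≠ ∅} |τ(b, z)| · r(b, z) of the schedule. -/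
variable {B Z U F : Type*}

/-- The clique induced by a schedule `(τ, κ, rate)`: it consists of the vertices
`(b, z, u, f_u, rate b z)` where `u ∈ τ (b, z)` and `f_u` is the unique element
of `κ (b, z) ∩ W u`. -/
noncomputable def schedClique [Fintype B] [Fintype Z] [Fintype U] [Fintype F]
    [DecidableEq B] [DecidableEq Z] [DecidableEq U] [DecidableEq F]
    (W : U → Finset F) (τ : B → Z → Finset U) (κ : B → Z → Finset F)
    (rate : B → Z → ℝ) : Finset (CV B Z U F) :=
  ((Finset.univ : Finset (B × Z × U × F)).filter fun p =>
      p.2.2.1 ∈ τ p.1 p.2.1 ∧ p.2.2.2 ∈ κ p.1 p.2.1 ∧ p.2.2.2 ∈ W p.2.2.1).image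
    fun p => ⟨p.1, p.2.1, p.2.2.1, p.2.2.2, rate p.1 p.2.1⟩


/-- Every feasible schedule induces a clique of the CRAN-IDNC graph, whose
weight equals the throughput of the schedule. -/
theorem schedule_induces_clique {B Z U F : Type*}
    [Fintype B] [Fintype Z] [Fintype U] [Fintype F]
    [DecidableEq B] [DecidableEq Z] [DecidableEq U] [DecidableEq F]
    (H W : U → Finset F) (Rset : Finset ℝ) (cap : B → Z → U → ℝ)
    (hDisj : ∀ u, Disjoint (H u) (W u)) (hRpos : ∀ r ∈ Rset, 0 < r)
    (τ : B → Z → Finset U) (κ : B → Z → Finset F) (rate : B → Z → ℝ)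
    (hfeas : Feasible H W Rset cap τ κ rate) :
    IsClique H W Rset cap (schedClique W τ κ rate) ∧
      ∑ v ∈ schedClique W τ κ rate, v.r =
        ∑ p ∈ Finset.univ.filter (fun p : B × Z => (τ p.1 p.2).Nonempty),
          ((τ p.1 p.2).card : ℝ) * rate p.1 p.2 := by
  obtain ⟨hR, hi, hii, hiii, hiv⟩ := hfeas
  -- membership characterization
  have hmem : ∀ v ∈ schedClique W τ κ rate,
      v.u ∈ τ v.b v.z ∧ v.f ∈ κ v.b v.z ∧ v.f ∈ W v.u ∧ v.r = rate v.b v.z := by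
    intro v hv
    simp only [schedClique, Finset.mem_image, Finset.mem_filter] at hv
    obtain ⟨p, ⟨_, h1, h2, h3⟩, rfl⟩ := hv
    exact ⟨h1, h2, h3, rfl⟩
  -- uniqueness of the wanted file
  have huniq : ∀ b z u f f', u ∈ τ b z → f ∈ κ b z → f ∈ W u →
      f' ∈ κ b z → f' ∈ W u → f = f' := by
    intro b z u f f' hu hf hfw hf' hfw'
    obtain ⟨g, hg, -⟩ := hii b z u hu
    have h1 : f ∈ κ b z ∩ W u := Finset.mem_inter.2 ⟨hf, hfw⟩
    have h2 : f' ∈ κ b z ∩ W u := Finset.mem_inter.2 ⟨hf', hfw'⟩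
    rw [hg, Finset.mem_singleton] at h1 h2
    rw [h1, h2]
  have hHas : ∀ b z u u' f f', u ∈ τ b z → u' ∈ τ b z →
      f ∈ κ b z → f ∈ W u → f' ∈ κ b z → f' ∈ W u' → f ≠ f' → f ∈ H u' := by
    intro b z u u' f f' hu hu' hf hfw hf' hfw' hne
    obtain ⟨g, hg, hsub⟩ := hii b z u' hu'
    have h2 : f' ∈ κ b z ∩ W u' := Finset.mem_inter.2 ⟨hf', hfw'⟩
    rw [hg, Finset.mem_singleton] at h2
    exact hsub (Finset.mem_sdiff.2 ⟨hf, by simp [← h2, hne]⟩)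
  constructor
  · constructor
    · intro v hv
      obtain ⟨h1, h2, h3, h4⟩ := hmem v hv
      exact ⟨h3, h4 ▸ hR v.b v.z ⟨v.u, h1⟩, h4 ▸ hiii v.b v.z v.u h1⟩
    · intro v hv v' hv' hne
      obtain ⟨h1, h2, h3, h4⟩ := hmem v hv
      obtain ⟨h1', h2', h3', h4'⟩ := hmem v' hv'
      refine ⟨hne, ?_⟩
      by_cases hbz : (v.b, v.z) = (v'.b, v'.z)
      · left
        obtain ⟨hb, hz⟩ := Prod.mk.injEq _ _ _ _ ▸ hbz
        refine ⟨hbz, ?_, by rw [h4, h4', hb, hz]⟩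
        by_cases hf : v.f = v'.f
        · exact Or.inl hf
        · refine Or.inr ⟨?_, ?_⟩
          · exact hHas v.b v.z v.u v'.u v.f v'.f h1 (by rw [hb, hz]; exact h1')
              h2 h3 (by rw [hb, hz]; exact h2') h3' hf
          · exact hHas v.b v.z v'.u v.u v'.f v.f (by rw [hb, hz]; exact h1') h1
              (by rw [hb, hz]; exact h2') h3' h2 h3 (Ne.symm hf)
      · right
        refine ⟨hbz, ?_⟩
        by_cases hu : v.u = v'.u
        · exact Or.inl ⟨hu, hi v.b v.z v'.b v'.z v.u h1 (hu ▸ h1')⟩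
        · exact Or.inr (Or.inr hu)
  · -- the weight equality
    have hinj : ∀ p ∈ (Finset.univ : Finset (B × Z × U × F)).filter fun p =>
        p.2.2.1 ∈ τ p.1 p.2.1 ∧ p.2.2.2 ∈ κ p.1 p.2.1 ∧ p.2.2.2 ∈ W p.2.2.1,
        ∀ q ∈ (Finset.univ : Finset (B × Z × U × F)).filter fun p =>
        p.2.2.1 ∈ τ p.1 p.2.1 ∧ p.2.2.2 ∈ κ p.1 p.2.1 ∧ p.2.2.2 ∈ W p.2.2.1,
        (⟨p.1, p.2.1, p.2.2.1, p.2.2.2, rate p.1 p.2.1⟩ : CV B Z U F) =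
        ⟨q.1, q.2.1, q.2.2.1, q.2.2.2, rate q.1 q.2.1⟩ → p = q := by
      rintro ⟨b, z, u, f⟩ - ⟨b', z', u', f'⟩ - h
      simp only [CV.mk.injEq] at h
      obtain ⟨rfl, rfl, rfl, rfl, -⟩ := h
      rfl
    rw [schedClique, Finset.sum_image hinj]
    have hrhs : ∑ p ∈ Finset.univ.filter (fun p : B × Z => (τ p.1 p.2).Nonempty),
        ((τ p.1 p.2).card : ℝ) * rate p.1 p.2 =
        ∑ b : B, ∑ z : Z, ((τ b z).card : ℝ) * rate b z := by
      rw [Finset.sum_filter, Fintype.sum_prod_type]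
      refine Finset.sum_congr rfl fun b _ => Finset.sum_congr rfl fun z _ => ?_
      by_cases h : (τ b z).Nonempty
      · simp [h]
      · simp [h, Finset.not_nonempty_iff_eq_empty.1 h]
    rw [hrhs, Finset.sum_filter, Fintype.sum_prod_type]
    refine Finset.sum_congr rfl fun b _ => ?_
    rw [Fintype.sum_prod_type]
    refine Finset.sum_congr rfl fun z _ => ?_
    rw [Fintype.sum_prod_type]
    have hterm : ∀ u : U, (∑ f : F,
        if u ∈ τ b z ∧ f ∈ κ b z ∧ f ∈ W u then rate b z else 0) =
        if u ∈ τ b z then rate b z else 0 := by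
      intro u
      by_cases hu : u ∈ τ b z
      · obtain ⟨g, hg, -⟩ := hii b z u hu
        have : ∀ f : F, (u ∈ τ b z ∧ f ∈ κ b z ∧ f ∈ W u) ↔ f = g := by
          intro f
          constructor
          · rintro ⟨-, hf, hfw⟩
            have : f ∈ κ b z ∩ W u := Finset.mem_inter.2 ⟨hf, hfw⟩
            rwa [hg, Finset.mem_singleton] at this
          · intro hfg
            have hmm : f ∈ κ b z ∩ W u := by
              rw [hg, Finset.mem_singleton]; exact hfg
            exact ⟨hu, Finset.mem_inter.1 hmm |>.1, Finset.mem_inter.1 hmm |>.2⟩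
        have hsum : (∑ f : F, if u ∈ τ b z ∧ f ∈ κ b z ∧ f ∈ W u
            then rate b z else 0) = ∑ f : F, if f = g then rate b z else 0 :=
          Finset.sum_congr rfl fun f _ => if_congr (this f) rfl rfl
        rw [hsum, Finset.sum_ite_eq' Finset.univ g (fun _ => rate b z), if_pos hu]
        simp
      · simp [hu]
    calc (∑ u : U, ∑ f : F,
        if u ∈ τ b z ∧ f ∈ κ b z ∧ f ∈ W u then rate b z else 0)
        = ∑ u : U, if u ∈ τ b z then rate b z else 0 :=
          Finset.sum_congr rfl fun u _ => hterm u
      _ = ((τ b z).card : ℝ) * rate b z := by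
          rw [Finset.sum_ite_mem, Finset.univ_inter, Finset.sum_const,
            nsmul_eq_mul]
end

section
/- The map sending a clique C of the CRAN-IDNC graph to its induced schedule (τ_C, κ_C, r_C) — where τ_C(b, z) = {u : ∃ f, r with (b, z, u, f, r) ∈ C}, κ_C(b, z) = {f : ∃ u, r with (b, z, u, f, r) ∈ C}, and r_C(b, z) is the common rate of the vertices of C at (b, z) when τ_C(b, z) ≠ ∅ — is a bijection between the set of cliques of the CRAN-IDNC graph and the set of feasible schedules, and it preserves value: the weight of each clique equals the throughput of its induced schedule. -/
variable {B Z U F : Type*}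

/-- A schedule: a targeted user set and a file combination for each resource
block `(b, z)`, together with a transmission rate that is defined exactly on
the resource blocks with a nonempty targeted user set. -/
structure Sched (B Z U F : Type*) where
  τ : B → Z → Finset U
  κ : B → Z → Finset F
  rate : B → Z → Option ℝ

/-- Feasibility of a schedule: the rate is defined (and lies in `Rset`) exactly
on the blocks with nonempty targeted user set; (i) each user is served by at
most one RRH; (ii) the combination `κ (b, z)` contains exactly one wanted file
of each targeted user and all its other files are in that user's Has set;
(iii) the rate does not exceed the capacity of any targeted user; and (iv) the
combination consists exactly of the wanted files of the targeted users. -/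
def FeasibleSched [DecidableEq F] (H W : U → Finset F) (Rset : Finset ℝ)
    (cap : B → Z → U → ℝ) (S : Sched B Z U F) : Prop :=
  (∀ b z, ((S.τ b z).Nonempty → ∃ x ∈ Rset, S.rate b z = some x) ∧
    (¬ (S.τ b z).Nonempty → S.rate b z = none)) ∧
  (∀ b z b' z' u, u ∈ S.τ b z → u ∈ S.τ b' z' → b = b') ∧
  (∀ b z u, u ∈ S.τ b z → ∃ f, S.κ b z ∩ W u = {f} ∧ S.κ b z \ {f} ⊆ H u) ∧
  (∀ b z u x, u ∈ S.τ b z → S.rate b z = some x → x ≤ cap b z u) ∧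
  (∀ b z, S.κ b z = (S.τ b z).biUnion fun u => S.κ b z ∩ W u)

/-- The throughput of a schedule: the sum, over the resource blocks with a
nonempty targeted user set, of the number of targeted users times the rate. -/
noncomputable def schedThroughput [Fintype B] [Fintype Z]
    (S : Sched B Z U F) : ℝ :=
  ∑ p ∈ Finset.univ.filter (fun p : B × Z => (S.τ p.1 p.2).Nonempty),
    ((S.τ p.1 p.2).card : ℝ) * (S.rate p.1 p.2).getD 0

/-- The common rate of the vertices of the clique `C` at resource block
`(b, z)` (defined exactly when `C` has a vertex there). -/
noncomputable def cliqueRate [DecidableEq B] [DecidableEq Z]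
    (C : Finset (CV B Z U F)) (b : B) (z : Z) : Option ℝ :=
  if h : (C.filter fun v => v.b = b ∧ v.z = z).Nonempty then some h.choose.r
  else none


section Aux

variable {B Z U F : Type*} [DecidableEq B] [DecidableEq Z] [DecidableEq U] [DecidableEq F]
variable {H W : U → Finset F} {Rset : Finset ℝ} {cap : B → Z → U → ℝ}
variable {C : Finset (CV B Z U F)}

lemma CV.ext' {v v' : CV B Z U F} (hb : v.b = v'.b) (hz : v.z = v'.z) (hu : v.u = v'.u)
    (hf : v.f = v'.f) (hr : v.r = v'.r) : v = v' := by
  cases v; cases v'; simp_all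

lemma clique_rate_eq (hC : IsClique H W Rset cap C) {v v' : CV B Z U F}
    (hv : v ∈ C) (hv' : v' ∈ C) (hb : v.b = v'.b) (hz : v.z = v'.z) : v.r = v'.r := by
  by_cases h : v = v'
  · rw [h]
  · rcases (hC.2 v hv v' hv' h).2 with ⟨_, _, hr⟩ | ⟨hne, _⟩
    · exact hr
    · exact absurd (by simp [Prod.ext_iff, hb, hz]) hne

lemma clique_LC1 (hC : IsClique H W Rset cap C) {v v' : CV B Z U F}
    (hv : v ∈ C) (hv' : v' ∈ C) (hb : v.b = v'.b) (hz : v.z = v'.z) (hne : v ≠ v') :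
    v.f = v'.f ∨ (v.f ∈ H v'.u ∧ v'.f ∈ H v.u) := by
  rcases (hC.2 v hv v' hv' hne).2 with ⟨_, hf, _⟩ | ⟨hp, _⟩
  · exact hf
  · exact absurd (by simp [Prod.ext_iff, hb, hz]) hp

lemma clique_file_eq (hDisj : ∀ u, Disjoint (H u) (W u))
    (hC : IsClique H W Rset cap C) {v v' : CV B Z U F}
    (hv : v ∈ C) (hv' : v' ∈ C) (hb : v.b = v'.b) (hz : v.z = v'.z) (hu : v.u = v'.u) :
    v.f = v'.f := by
  by_cases h : v = v'
  · rw [h]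
  · rcases clique_LC1 hC hv hv' hb hz h with hf | ⟨hf1, hf2⟩
    · exact hf
    · exact absurd ((hC.1 v' hv').1) (Finset.disjoint_left.mp (hDisj v'.u) (hu ▸ hf2))

lemma clique_vertex_ext (hDisj : ∀ u, Disjoint (H u) (W u))
    (hC : IsClique H W Rset cap C) {v v' : CV B Z U F}
    (hv : v ∈ C) (hv' : v' ∈ C) (hb : v.b = v'.b) (hz : v.z = v'.z) (hu : v.u = v'.u) :
    v = v' :=
  CV.ext' hb hz hu (clique_file_eq hDisj hC hv hv' hb hz hu) (clique_rate_eq hC hv hv' hb hz)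

lemma clique_same_b (hC : IsClique H W Rset cap C) {v v' : CV B Z U F}
    (hv : v ∈ C) (hv' : v' ∈ C) (hu : v.u = v'.u) : v.b = v'.b := by
  by_cases h : v = v'
  · rw [h]
  · rcases (hC.2 v hv v' hv' h).2 with ⟨hp, _⟩ | ⟨_, ⟨_, hb⟩ | ⟨hb, _⟩ | hne⟩
    · exact (Prod.ext_iff.mp hp).1
    · exact hb
    · exact hb
    · exact absurd hu hne

lemma mem_cliqueTau {b : B} {z : Z} {u : U} :
    u ∈ cliqueTau C b z ↔ ∃ v ∈ C, v.b = b ∧ v.z = z ∧ v.u = u := by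
  simp [cliqueTau, Finset.mem_image, Finset.mem_filter, and_assoc]

lemma mem_cliqueKappa {b : B} {z : Z} {f : F} :
    f ∈ cliqueKappa C b z ↔ ∃ v ∈ C, v.b = b ∧ v.z = z ∧ v.f = f := by
  simp [cliqueKappa, Finset.mem_image, Finset.mem_filter, and_assoc]

lemma cliqueRate_of_mem (hC : IsClique H W Rset cap C) {v : CV B Z U F} (hv : v ∈ C) :
    cliqueRate C v.b v.z = some v.r := by
  have hne : (C.filter fun w => w.b = v.b ∧ w.z = v.z).Nonempty :=
    ⟨v, Finset.mem_filter.mpr ⟨hv, rfl, rfl⟩⟩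
  rw [cliqueRate, dif_pos hne]
  have hspec := hne.choose_spec
  rw [Finset.mem_filter] at hspec
  exact congrArg some (clique_rate_eq hC hspec.1 hv hspec.2.1 hspec.2.2)

lemma clique_kappa_inter (hDisj : ∀ u, Disjoint (H u) (W u))
    (hC : IsClique H W Rset cap C) {v : CV B Z U F} (hv : v ∈ C) :
    cliqueKappa C v.b v.z ∩ W v.u = {v.f} := by
  ext g
  simp only [Finset.mem_inter, mem_cliqueKappa, Finset.mem_singleton]
  constructor
  · rintro ⟨⟨v', hv', hb, hz, rfl⟩, hgW⟩
    by_cases h : v' = v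
    · rw [h]
    · rcases clique_LC1 hC hv' hv hb hz h with hf | ⟨hf1, hf2⟩
      · exact hf
      · exact absurd hgW (Finset.disjoint_left.mp (hDisj v.u) hf1)
  · rintro rfl
    exact ⟨⟨v, hv, rfl, rfl, rfl⟩, (hC.1 v hv).1⟩

lemma clique_kappa_diff (hDisj : ∀ u, Disjoint (H u) (W u))
    (hC : IsClique H W Rset cap C) {v : CV B Z U F} (hv : v ∈ C) :
    cliqueKappa C v.b v.z \ {v.f} ⊆ H v.u := by
  intro g hg
  rw [Finset.mem_sdiff, Finset.mem_singleton, mem_cliqueKappa] at hg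
  obtain ⟨⟨v', hv', hb, hz, rfl⟩, hgne⟩ := hg
  have h : v' ≠ v := fun h => hgne (by rw [h])
  rcases clique_LC1 hC hv' hv hb hz h with hf | ⟨hf1, _⟩
  · exact absurd hf hgne
  · exact hf1

/-- The schedule induced by a clique. -/
noncomputable def cliqueSched (C : Finset (CV B Z U F)) : Sched B Z U F :=
  ⟨cliqueTau C, cliqueKappa C, cliqueRate C⟩

lemma cliqueTau_nonempty_iff {b : B} {z : Z} :
    (cliqueTau C b z).Nonempty ↔ (C.filter fun v => v.b = b ∧ v.z = z).Nonempty := by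
  simp [cliqueTau, Finset.image_nonempty]

lemma cliqueSched_feasible (hDisj : ∀ u, Disjoint (H u) (W u))
    (hC : IsClique H W Rset cap C) :
    FeasibleSched H W Rset cap (cliqueSched C) := by
  refine ⟨fun b z => ⟨?_, ?_⟩, ?_, ?_, ?_, ?_⟩
  · -- rate defined on nonempty blocks
    intro hne
    obtain ⟨u, hu⟩ := hne
    obtain ⟨v, hv, hb, hz, -⟩ := mem_cliqueTau.mp hu
    subst hb; subst hz
    exact ⟨v.r, (hC.1 v hv).2.1, cliqueRate_of_mem hC hv⟩
  · -- rate none on empty blocks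
    intro hne
    show cliqueRate C b z = none
    rw [cliqueRate, dif_neg]
    intro h
    exact hne (cliqueTau_nonempty_iff.mpr h)
  · -- (i)
    intro b z b' z' u hu hu'
    obtain ⟨v, hv, rfl, rfl, hvu⟩ := mem_cliqueTau.mp hu
    obtain ⟨v', hv', rfl, rfl, hvu'⟩ := mem_cliqueTau.mp hu'
    exact clique_same_b hC hv hv' (by rw [hvu, hvu'])
  · -- (ii)
    intro b z u hu
    obtain ⟨v, hv, rfl, rfl, rfl⟩ := mem_cliqueTau.mp hu
    exact ⟨v.f, clique_kappa_inter hDisj hC hv, clique_kappa_diff hDisj hC hv⟩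
  · -- (iii)
    intro b z u x hu hx
    obtain ⟨v, hv, rfl, rfl, rfl⟩ := mem_cliqueTau.mp hu
    have := cliqueRate_of_mem hC hv
    rw [show (cliqueSched C).rate v.b v.z = cliqueRate C v.b v.z from rfl, this] at hx
    have hxr : x = v.r := by injection hx.symm
    rw [hxr]
    exact (hC.1 v hv).2.2
  · -- (iv)
    intro b z
    ext f
    simp only [Finset.mem_biUnion]
    constructor
    · intro hf
      obtain ⟨v, hv, rfl, rfl, rfl⟩ := mem_cliqueKappa.mp hf
      refine ⟨v.u, mem_cliqueTau.mpr ⟨v, hv, rfl, rfl, rfl⟩, ?_⟩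
      rw [show (cliqueSched C).κ v.b v.z = cliqueKappa C v.b v.z from rfl,
        clique_kappa_inter hDisj hC hv]
      exact Finset.mem_singleton_self _
    · rintro ⟨u, -, hf⟩
      exact (Finset.mem_inter.mp hf).1

lemma mem_clique_iff (hDisj : ∀ u, Disjoint (H u) (W u))
    (hC : IsClique H W Rset cap C) {v : CV B Z U F} :
    v ∈ C ↔ v.u ∈ cliqueTau C v.b v.z ∧ v.f ∈ cliqueKappa C v.b v.z ∩ W v.u ∧
      cliqueRate C v.b v.z = some v.r := by
  constructor
  · intro hv
    refine ⟨mem_cliqueTau.mpr ⟨v, hv, rfl, rfl, rfl⟩, ?_, cliqueRate_of_mem hC hv⟩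
    rw [clique_kappa_inter hDisj hC hv]
    exact Finset.mem_singleton_self _
  · rintro ⟨hu, hf, hr⟩
    obtain ⟨v', hv', hb, hz, hu'⟩ := mem_cliqueTau.mp hu
    have hκ : cliqueKappa C v.b v.z ∩ W v.u = {v'.f} := by
      rw [← hb, ← hz, ← hu']
      exact clique_kappa_inter hDisj hC hv'
    rw [hκ, Finset.mem_singleton] at hf
    have hrr : cliqueRate C v.b v.z = some v'.r := by
      rw [← hb, ← hz]
      exact cliqueRate_of_mem hC hv'
    rw [hrr] at hr
    have : v'.r = v.r := by injection hr
    have hveq : v = v' := CV.ext' hb.symm hz.symm hu'.symm hf this.symm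
    rw [hveq]
    exact hv'

section Inv

variable [Fintype B] [Fintype Z]

/-- The clique induced by a schedule. -/
noncomputable def invC (W : U → Finset F) (S : Sched B Z U F) : Finset (CV B Z U F) :=
  Finset.univ.biUnion fun p : B × Z =>
    (S.τ p.1 p.2).biUnion fun u =>
      (S.κ p.1 p.2 ∩ W u).biUnion fun f =>
        (S.rate p.1 p.2).toFinset.image fun r => ⟨p.1, p.2, u, f, r⟩

lemma mem_invC {S : Sched B Z U F} {v : CV B Z U F} :
    v ∈ invC W S ↔ v.u ∈ S.τ v.b v.z ∧ v.f ∈ S.κ v.b v.z ∩ W v.u ∧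
      S.rate v.b v.z = some v.r := by
  obtain ⟨b, z, u, f, r⟩ := v
  simp only [invC, Finset.mem_biUnion, Finset.mem_univ, true_and, Finset.mem_image,
    Option.mem_toFinset, Option.mem_def]
  constructor
  · rintro ⟨⟨b', z'⟩, u', hu', f', hf', r', hr', h⟩
    cases h
    exact ⟨hu', hf', hr'⟩
  · rintro ⟨hu, hf, hr⟩
    exact ⟨(b, z), u, hu, f, hf, r, hr, rfl⟩

lemma feas_inter_eq {S : Sched B Z U F} (hS : FeasibleSched H W Rset cap S)
    {b : B} {z : Z} {u : U} {f : F} (hu : u ∈ S.τ b z) (hf : f ∈ S.κ b z ∩ W u) :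
    S.κ b z ∩ W u = {f} := by
  obtain ⟨g, hg, -⟩ := hS.2.2.1 b z u hu
  rw [hg] at hf ⊢
  rw [Finset.mem_singleton] at hf
  rw [hf]

lemma invC_isClique {S : Sched B Z U F} (hS : FeasibleSched H W Rset cap S) :
    IsClique H W Rset cap (invC W S) := by
  constructor
  · intro v hv
    obtain ⟨hu, hf, hr⟩ := mem_invC.mp hv
    refine ⟨(Finset.mem_inter.mp hf).2, ?_, hS.2.2.2.1 _ _ _ _ hu hr⟩
    obtain ⟨x, hxR, hx⟩ := (hS.1 v.b v.z).1 ⟨v.u, hu⟩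
    rw [hr] at hx
    injection hx with hxe
    rw [hxe]
    exact hxR
  · intro v hv v' hv' hne
    obtain ⟨hu, hf, hr⟩ := mem_invC.mp hv
    obtain ⟨hu', hf', hr'⟩ := mem_invC.mp hv'
    refine ⟨hne, ?_⟩
    by_cases hp : (v.b, v.z) = (v'.b, v'.z)
    · have hb : v.b = v'.b := congrArg Prod.fst hp
      have hz : v.z = v'.z := congrArg Prod.snd hp
      left
      refine ⟨hp, ?_, ?_⟩
      · by_cases huu : v.u = v'.u
        · left
          have h1 : S.κ v.b v.z ∩ W v.u = {v.f} := feas_inter_eq hS hu hf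
          have h2 : S.κ v.b v.z ∩ W v.u = {v'.f} := by
            rw [hb, hz, huu]
            exact feas_inter_eq hS hu' hf'
          rw [h1] at h2
          exact Finset.singleton_injective h2
        · by_cases hff : v.f = v'.f
          · exact Or.inl hff
          · right
            obtain ⟨g, hg, hsub⟩ := hS.2.2.1 v.b v.z v.u hu
            obtain ⟨g', hg', hsub'⟩ := hS.2.2.1 v'.b v'.z v'.u hu'
            have hgf : g = v.f := by
              have := feas_inter_eq hS hu hf
              rw [hg] at this
              exact Finset.singleton_injective this
            have hgf' : g' = v'.f := by
              have := feas_inter_eq hS hu' hf'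
              rw [hg'] at this
              exact Finset.singleton_injective this
            subst hgf; subst hgf'
            constructor
            · apply hsub'
              rw [Finset.mem_sdiff, Finset.mem_singleton]
              refine ⟨?_, hff⟩
              rw [← hb, ← hz]
              exact (Finset.mem_inter.mp hf).1
            · apply hsub
              rw [Finset.mem_sdiff, Finset.mem_singleton]
              refine ⟨?_, fun h => hff h.symm⟩
              rw [hb, hz]
              exact (Finset.mem_inter.mp hf').1
      · rw [hb, hz] at hr
        rw [hr] at hr'
        injection hr'
    · right
      refine ⟨hp, ?_⟩
      by_cases huu : v.u = v'.u
      · exact Or.inl ⟨huu, hS.2.1 v.b v.z v'.b v'.z v.u hu (huu ▸ hu')⟩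
      · exact Or.inr (Or.inr huu)

lemma invC_tau {S : Sched B Z U F} (hS : FeasibleSched H W Rset cap S) (b : B) (z : Z) :
    cliqueTau (invC W S) b z = S.τ b z := by
  ext u
  rw [mem_cliqueTau]
  constructor
  · rintro ⟨v, hv, rfl, rfl, rfl⟩
    exact (mem_invC.mp hv).1
  · intro hu
    obtain ⟨g, hg, -⟩ := hS.2.2.1 b z u hu
    obtain ⟨x, -, hx⟩ := (hS.1 b z).1 ⟨u, hu⟩
    refine ⟨⟨b, z, u, g, x⟩, mem_invC.mpr ⟨hu, ?_, hx⟩, rfl, rfl, rfl⟩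
    rw [hg]
    exact Finset.mem_singleton_self _

lemma invC_kappa {S : Sched B Z U F} (hS : FeasibleSched H W Rset cap S) (b : B) (z : Z) :
    cliqueKappa (invC W S) b z = S.κ b z := by
  ext f
  rw [mem_cliqueKappa]
  constructor
  · rintro ⟨v, hv, rfl, rfl, rfl⟩
    exact (Finset.mem_inter.mp (mem_invC.mp hv).2.1).1
  · intro hf
    have hf' := hf
    rw [hS.2.2.2.2 b z, Finset.mem_biUnion] at hf'
    obtain ⟨u, hu, hfu⟩ := hf'
    obtain ⟨x, -, hx⟩ := (hS.1 b z).1 ⟨u, hu⟩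
    exact ⟨⟨b, z, u, f, x⟩, mem_invC.mpr ⟨hu, hfu, hx⟩, rfl, rfl, rfl⟩

lemma invC_rate {S : Sched B Z U F} (hS : FeasibleSched H W Rset cap S) (b : B) (z : Z) :
    cliqueRate (invC W S) b z = S.rate b z := by
  by_cases hne : (S.τ b z).Nonempty
  · obtain ⟨u, hu⟩ := hne
    obtain ⟨g, hg, -⟩ := hS.2.2.1 b z u hu
    obtain ⟨x, -, hx⟩ := (hS.1 b z).1 ⟨u, hu⟩
    have hv : (⟨b, z, u, g, x⟩ : CV B Z U F) ∈ invC W S := by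
      refine mem_invC.mpr ⟨hu, ?_, hx⟩
      rw [hg]
      exact Finset.mem_singleton_self _
    rw [cliqueRate_of_mem (invC_isClique hS) hv, hx]
  · rw [(hS.1 b z).2 hne, cliqueRate, dif_neg]
    intro ⟨v, hv⟩
    rw [Finset.mem_filter] at hv
    obtain ⟨hv, hb, hz⟩ := hv
    have := (mem_invC.mp hv).1
    rw [hb, hz] at this
    exact hne ⟨v.u, this⟩

end Inv

lemma clique_weight [Fintype B] [Fintype Z] (hDisj : ∀ u, Disjoint (H u) (W u))
    (hC : IsClique H W Rset cap C) :
    ∑ v ∈ C, v.r = schedThroughput (cliqueSched C) := by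
  have h1 : ∑ v ∈ C, v.r =
      ∑ p ∈ (Finset.univ : Finset (B × Z)),
        ∑ v ∈ C.filter fun v => v.b = p.1 ∧ v.z = p.2, v.r := by
    rw [← Finset.sum_fiberwise_of_maps_to (g := fun v : CV B Z U F => (v.b, v.z))
      (fun v _ => Finset.mem_univ _) (fun v => v.r)]
    refine Finset.sum_congr rfl fun p _ => Finset.sum_congr ?_ fun _ _ => rfl
    apply Finset.filter_congr
    intro v _
    simp [Prod.ext_iff]
  rw [h1, schedThroughput]
  rw [← Finset.sum_subset (Finset.filter_subset
    (fun p : B × Z => ((cliqueSched C).τ p.1 p.2).Nonempty) Finset.univ) ?_]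
  · refine Finset.sum_congr rfl fun p hp => ?_
    rw [Finset.mem_filter] at hp
    have hfne : (C.filter fun v => v.b = p.1 ∧ v.z = p.2).Nonempty :=
      cliqueTau_nonempty_iff.mp hp.2
    have hcard : ((cliqueSched C).τ p.1 p.2).card =
        (C.filter fun v => v.b = p.1 ∧ v.z = p.2).card := by
      show (cliqueTau C p.1 p.2).card = _
      rw [cliqueTau]
      apply Finset.card_image_of_injOn
      intro v hv v' hv' huv
      rw [Finset.mem_coe, Finset.mem_filter] at hv hv'
      exact clique_vertex_ext hDisj hC hv.1 hv'.1 (hv.2.1.trans hv'.2.1.symm)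
        (hv.2.2.trans hv'.2.2.symm) huv
    obtain ⟨w, hw⟩ := hfne
    rw [Finset.mem_filter] at hw
    have hrw : (cliqueSched C).rate p.1 p.2 = some w.r := by
      show cliqueRate C p.1 p.2 = some w.r
      rw [← hw.2.1, ← hw.2.2]
      exact cliqueRate_of_mem hC hw.1
    have hconst : ∀ v ∈ C.filter fun v => v.b = p.1 ∧ v.z = p.2, v.r = w.r := by
      intro v hv
      rw [Finset.mem_filter] at hv
      exact clique_rate_eq hC hv.1 hw.1 (hv.2.1.trans hw.2.1.symm)
        (hv.2.2.trans hw.2.2.symm)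
    rw [Finset.sum_congr rfl hconst, Finset.sum_const, hcard, hrw, nsmul_eq_mul]
    rfl
  · intro p _ hp
    rw [Finset.mem_filter, not_and] at hp
    have hτ : ¬ ((cliqueSched C).τ p.1 p.2).Nonempty := hp (Finset.mem_univ _)
    have : ¬ (C.filter fun v => v.b = p.1 ∧ v.z = p.2).Nonempty :=
      fun h => hτ (cliqueTau_nonempty_iff.mpr h)
    rw [Finset.not_nonempty_iff_eq_empty.mp this, Finset.sum_empty]

end Aux

/-- The map sending a clique of the CRAN-IDNC graph to its induced schedule is
a bijection onto the set of feasible schedules, and the weight of each clique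
equals the throughput of its induced schedule. -/
theorem clique_schedule_bijection {B Z U F : Type*}
    [Fintype B] [Fintype Z] [Fintype U] [Fintype F]
    [DecidableEq B] [DecidableEq Z] [DecidableEq U] [DecidableEq F]
    (H W : U → Finset F) (Rset : Finset ℝ) (cap : B → Z → U → ℝ)
    (hDisj : ∀ u, Disjoint (H u) (W u)) (hRpos : ∀ r ∈ Rset, 0 < r) :
    ∃ e : {C : Finset (CV B Z U F) // IsClique H W Rset cap C} ≃
        {S : Sched B Z U F // FeasibleSched H W Rset cap S},
      (∀ C, (e C).1.τ = cliqueTau C.1 ∧ (e C).1.κ = cliqueKappa C.1 ∧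
        (e C).1.rate = cliqueRate C.1) ∧
      ∀ C, ∑ v ∈ C.1, v.r = schedThroughput (e C).1 := by
  have hinj : ∀ C₁ C₂ : {C : Finset (CV B Z U F) // IsClique H W Rset cap C},
      cliqueSched C₁.1 = cliqueSched C₂.1 → C₁ = C₂ := by
    rintro ⟨C₁, h₁⟩ ⟨C₂, h₂⟩ h
    have hτ : cliqueTau C₁ = cliqueTau C₂ := congrArg Sched.τ h
    have hκ : cliqueKappa C₁ = cliqueKappa C₂ := congrArg Sched.κ h
    have hr : cliqueRate C₁ = cliqueRate C₂ := congrArg Sched.rate h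
    refine Subtype.ext ?_
    ext v
    rw [mem_clique_iff hDisj h₁, mem_clique_iff hDisj h₂, hτ, hκ, hr]
  refine ⟨Equiv.ofBijective
    (fun C => ⟨cliqueSched C.1, cliqueSched_feasible hDisj C.2⟩) ⟨?_, ?_⟩,
    fun C => ⟨rfl, rfl, rfl⟩, fun C => clique_weight hDisj C.2⟩
  · intro C₁ C₂ h
    exact hinj C₁ C₂ (congrArg Subtype.val h)
  · rintro ⟨S, hS⟩
    refine ⟨⟨invC W S, invC_isClique hS⟩, Subtype.ext ?_⟩
    show cliqueSched (invC W S) = S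
    obtain ⟨τ, κ, rate⟩ := S
    simp only [cliqueSched, Sched.mk.injEq]
    exact ⟨funext fun b => funext fun z => invC_tau hS b z,
      funext fun b => funext fun z => invC_kappa hS b z,
      funext fun b => funext fun z => invC_rate hS b z⟩
end
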